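/- Let B be a crystal in the sense of Kashiwara for a finite-type simply-laced root system, and suppose ξ: B(λ) → B(λ) is a set map satisfying wt(ξ(b)) = w_0(wt(b)), ξ(ẽ_i(b)) = f̃_{τ(i)}(ξ(b)), and ξ(f̃_i(b)) = ẽ_{τ(i)}(ξ(b)) for all b and i, where τ is defined by α_{τ(i)} = -w_0(α_i). Then ξ is uniquely determined by these properties and ξ² = id, i.e. ξ is an involution. -/

import Mathlib

/-- Let `B(λ)` be the connected highest-weight crystal of the
irreducible representation `L(λ)` of a finite-type simply-laced root system: a finite set
`BB` with crystal operators `e i, f i : BB → Option BB` (with `none` playing the role of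
`0`), weight function `wt`, a unique highest weight element `bhigh` (killed by all `e i`,
unique of its weight, generating `BB` under the `f i`), and a unique element of lowest
weight `w₀ (wt bhigh)`.  Suppose `ξ : BB → BB` satisfies `wt (ξ b) = w₀ (wt b)`,
`ξ (ẽ_i b) = f̃_{τ i} (ξ b)` and `ξ (f̃_i b) = ẽ_{τ i} (ξ b)` for all `b, i`, where
`w₀` and the diagram automorphism `τ` (defined by `α_{τ i} = -w₀ α_i`) are involutions.
Then `ξ` is uniquely determined by these properties, and `ξ² = id`. -/
theorem schutzenberger_involution_unique_and_involutive
    {I BB X : Type*} [Finite BB] [AddCommGroup X]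
    (e f : I → BB → Option BB) (wt : BB → X)
    (w₀ : X → X) (hw₀ : ∀ x, w₀ (w₀ x) = x)
    (τ : I → I) (hτ : ∀ i, τ (τ i) = i)
    (hef : ∀ i b b', e i b = some b' ↔ f i b' = some b)
    (bhigh : BB) (hhw : ∀ i, e i bhigh = none)
    (hgen : ∀ b : BB, ∃ l : List I,
      l.foldl (fun ob i => ob.bind (f i)) (some bhigh) = some b)
    (huniq_hi : ∀ b, wt b = wt bhigh → b = bhigh)
    (huniq_lo : ∀ b b', wt b = w₀ (wt bhigh) → wt b' = w₀ (wt bhigh) → b = b')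
    (ξ : BB → BB)
    (hξwt : ∀ b, wt (ξ b) = w₀ (wt b))
    (hξe : ∀ i b, (e i b).map ξ = f (τ i) (ξ b))
    (hξf : ∀ i b, (f i b).map ξ = e (τ i) (ξ b)) :
    (∀ ξ' : BB → BB, (∀ b, wt (ξ' b) = w₀ (wt b)) →
      (∀ i b, (e i b).map ξ' = f (τ i) (ξ' b)) →
      (∀ i b, (f i b).map ξ' = e (τ i) (ξ' b)) → ξ' = ξ) ∧
    Function.Involutive ξ := by
  have hnone : ∀ (l : List I), l.foldl (fun ob i => ob.bind (f i)) none = none := by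
    intro l; induction l with
    | nil => rfl
    | cons i l ih => simpa using ih
  have key : ∀ (h k : BB → BB),
      (∀ i b b', f i b = some b' → h b = k b → h b' = k b') →
      h bhigh = k bhigh → ∀ b, h b = k b := by
    intro h k hstep hbase b
    obtain ⟨l, hl⟩ := hgen b
    have main : ∀ (l : List I) (b0 b : BB), h b0 = k b0 →
        l.foldl (fun ob i => ob.bind (f i)) (some b0) = some b → h b = k b := by
      intro l
      induction l with
      | nil =>
        intro b0 b h0 hfold
        obtain rfl : b0 = b := Option.some.inj hfold
        exact h0
      | cons i l ih =>
        intro b0 b h0 hfold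
        simp only [List.foldl_cons, Option.bind_some] at hfold
        cases hfb : f i b0 with
        | none =>
          rw [hfb, hnone] at hfold
          exact absurd hfold (by simp)
        | some b1 =>
          rw [hfb] at hfold
          exact ih b1 b (hstep i b0 b1 hfb h0) hfold
    exact main l bhigh b hbase hl
  constructor
  · intro ξ' hwt' _ hf'
    funext b
    refine key ξ' ξ ?_ ?_ b
    · intro i b0 b1 hfb heq
      have h1 := hf' i b0
      have h2 := hξf i b0
      rw [hfb] at h1 h2
      simp only [Option.map_some] at h1 h2
      rw [heq, ← h2] at h1
      exact Option.some.inj h1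
    · exact huniq_lo _ _ (by rw [hwt' bhigh]) (by rw [hξwt bhigh])
  · intro b
    refine key (fun b => ξ (ξ b)) (fun b => b) ?_ ?_ b
    · intro i b0 b1 hfb heq
      show ξ (ξ b1) = b1
      have h2 := hξf i b0
      rw [hfb, Option.map_some] at h2
      have h3 := hξe (τ i) (ξ b0)
      rw [← h2, Option.map_some, hτ, heq, hfb] at h3
      exact Option.some.inj h3
    · show ξ (ξ bhigh) = bhigh
      apply huniq_hi
      rw [hξwt, hξwt, hw₀]
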